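/- Suppose the Yang-Baxter algebra relations hold (with XXX structure functions f(λ,μ) = (λ-μ+1)/(λ-μ), g(λ,μ) = 1/(λ-μ)) and the pseudovacuum satisfies A(λ)|0⟩ = α(λ)|0⟩, D(λ)|0⟩ = δ(λ)|0⟩, C(λ)|0⟩ = 0. If distinct parameters λ₁,...,λ_M satisfy the Bethe equations α(λ_i)g(λ,λ_i)∏_{k≠i} f(λ_k,λ_i) + δ(λ_i)g(λ_i,λ)∏_{k≠i} f(λ_i,λ_k) = 0 for all i, then the Bethe vector |λ₁,...,λ_M⟩ = B(λ₁)...B(λ_M)|0⟩ is an eigenvector of the transfer matrix A(λ)+D(λ) with eigenvalue Λ(λ) = α(λ)∏_i f(λ_i,λ) + δ(λ)∏_i f(λ,λ_i). -/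

import Mathlib

noncomputable def fXXX (l m : ℂ) : ℂ := (l - m + 1) / (l - m)

noncomputable def gXXX (l m : ℂ) : ℂ := 1 / (l - m)

open Finset in
private lemma erase_zero_prod' {M : ℕ} (h : Fin (M + 1) → ℂ) :
    ∏ k ∈ univ.erase (0 : Fin (M + 1)), h k = ∏ k : Fin M, h (Fin.succ k) := by
  rw [← Finset.compl_singleton, ← Fin.image_succ_univ, Finset.prod_image]
  intro x _ y _ hxy
  exact Fin.succ_injective _ hxy

open Finset in
private lemma erase_succ_prod' {M : ℕ} (h : Fin (M + 1) → ℂ) (j : Fin M) :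
    ∏ k ∈ univ.erase (Fin.succ j), h k = h 0 * ∏ k ∈ univ.erase j, h (Fin.succ k) := by
  have himg : univ.erase (Fin.succ j) = insert 0 ((univ.erase j).image Fin.succ) := by
    ext k
    induction k using Fin.cases with
    | zero => simp [(Fin.succ_ne_zero j).symm]
    | succ k => simp [Fin.succ_inj, Fin.succ_ne_zero k]
  rw [himg, Finset.prod_insert (by simp [Fin.succ_ne_zero]),
    Finset.prod_image (by intro x _ y _ hxy; exact Fin.succ_injective _ hxy)]

private lemma rearrange4 {V : Type*} [AddCommGroup V] (a b S1 S2 : V) :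
    a + S1 + (b + S2) = a + (b + (S1 + S2)) := by abel

/-- Key off-shell lemma: action of `T(μ)` on a product of `B`'s. -/
private lemma key_lemma {V : Type*} [AddCommGroup V] [Module ℂ V]
    (B T : ℂ → Module.End ℂ V) (τ : ℂ → ℂ) (F G : ℂ → ℂ → ℂ) (v0 : V)
    (hBB : ∀ l m : ℂ, B l * B m = B m * B l)
    (hTB : ∀ l m : ℂ, l ≠ m → T m * B l = F l m • (B l * T m) + G m l • (B m * T l))
    (hT0 : ∀ l : ℂ, T l v0 = τ l • v0)
    (hFG : ∀ l m x : ℂ, l ≠ m → m ≠ x → l ≠ x →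
      F l m * G m x + G m l * G l x = G m x * F l x) :
    ∀ (M : ℕ) (lam : Fin M → ℂ) (μ : ℂ),
      (∀ i j, i ≠ j → lam i ≠ lam j) → (∀ i, lam i ≠ μ) →
      T μ ((List.ofFn fun i => B (lam i)).prod v0)
        = (τ μ * ∏ i, F (lam i) μ) • (List.ofFn fun i => B (lam i)).prod v0
          + ∑ i, (τ (lam i) * G μ (lam i) * ∏ k ∈ Finset.univ.erase i, F (lam k) (lam i)) •
              (B μ * (((List.ofFn lam).eraseIdx i.val).map B).prod) v0 := by
  intro M
  induction M with
  | zero =>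
    intro lam μ _ _
    simp [hT0]
  | succ M ih =>
    intro lam μ hdist hμ
    set l : ℂ := lam 0 with hl
    set lam' : Fin M → ℂ := fun i => lam i.succ with hlam'
    have hl0 : lam 0 = l := rfl
    have hlam'' : ∀ i, lam (Fin.succ i) = lam' i := fun _ => rfl
    have h1 : l ≠ μ := hμ 0
    have h2 : ∀ i, lam' i ≠ μ := fun i => hμ _
    have h3 : ∀ i, lam' i ≠ l := fun i => hdist _ _ (Fin.succ_ne_zero i)
    have h4 : ∀ i j, i ≠ j → lam' i ≠ lam' j := fun i j hij =>
      hdist _ _ (fun h => hij (Fin.succ_injective _ h))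
    have hcomm : ∀ j : Fin M,
        (B l) ((B μ * (List.map B ((List.ofFn lam').eraseIdx (j : ℕ))).prod) v0)
          = (B μ) ((B l * (List.map B ((List.ofFn lam').eraseIdx (j : ℕ))).prod) v0) := by
      intro j
      set E : Module.End ℂ V := (List.map B ((List.ofFn lam').eraseIdx (j : ℕ))).prod
      have hc : B l * (B μ * E) = B μ * (B l * E) := by
        rw [← mul_assoc, hBB l μ, mul_assoc]
      calc (B l) ((B μ * E) v0) = (B l * (B μ * E)) v0 := rfl
        _ = (B μ * (B l * E)) v0 := by rw [hc]
        _ = (B μ) ((B l * E) v0) := rfl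
    have hTμ := ih lam' μ h4 h2
    have hTl := ih lam' l h4 h3
    have hofn : (List.ofFn fun i : Fin (M + 1) => B (lam i)) =
        B l :: (List.ofFn fun i => B (lam' i)) := by
      rw [List.ofFn_succ]
    -- LHS normal form
    have hLHS : T μ ((List.ofFn fun i : Fin (M + 1) => B (lam i)).prod v0)
        = F l μ • (B l) (T μ ((List.ofFn fun i => B (lam' i)).prod v0))
          + G μ l • (B μ) ((T l) ((List.ofFn fun i => B (lam' i)).prod v0)) := by
      rw [hofn, List.prod_cons]
      have e1 : T μ ((B l * (List.ofFn fun i => B (lam' i)).prod) v0)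
          = (T μ * B l) ((List.ofFn fun i => B (lam' i)).prod v0) := rfl
      rw [e1, hTB l μ h1]
      simp
    rw [hLHS, hTμ, hTl]
    -- RHS normal form
    rw [hofn, List.prod_cons]
    rw [Fin.prod_univ_succ, Fin.sum_univ_succ]
    simp only [hl0, hlam'']
    have herase0 : (((List.ofFn lam).eraseIdx ((0 : Fin (M + 1)) : ℕ)).map B).prod
        = (List.ofFn fun i => B (lam' i)).prod := by
      rw [List.ofFn_succ]
      simp [List.map_ofFn, Function.comp_def]
      rfl
    have heraseS : ∀ j : Fin M,
        (((List.ofFn lam).eraseIdx ((Fin.succ j : Fin (M + 1)) : ℕ)).map B).prod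
          = B l * (List.map B ((List.ofFn lam').eraseIdx (j : ℕ))).prod := by
      intro j
      rw [List.ofFn_succ]
      simp only [Fin.val_succ, List.eraseIdx_cons_succ, List.map_cons, List.prod_cons]
      rfl
    rw [herase0]
    simp only [heraseS]
    rw [erase_zero_prod' (fun k => F (lam k) l)]
    simp only [hlam'']
    have hsuccP : ∀ j : Fin M, ∀ x : ℂ,
        ∏ k ∈ Finset.univ.erase (Fin.succ j), F (lam k) x
          = F l x * ∏ k ∈ Finset.univ.erase j, F (lam' k) x := by
      intro j x
      rw [erase_succ_prod' (fun k => F (lam k) x) j]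
    simp only [hsuccP]
    have hBμP : (B μ * (List.ofFn fun i => B (lam' i)).prod) v0
        = (B μ) ((List.ofFn fun i => B (lam' i)).prod v0) := rfl
    have hBlP : (B l * (List.ofFn fun i => B (lam' i)).prod) v0
        = (B l) ((List.ofFn fun i => B (lam' i)).prod v0) := rfl
    have hBμE : ∀ j : Fin M,
        (B μ * (B l * (List.map B ((List.ofFn lam').eraseIdx (j : ℕ))).prod)) v0
          = (B μ) ((B l * (List.map B ((List.ofFn lam').eraseIdx (j : ℕ))).prod) v0) :=
      fun j => rfl
    simp only [hBμP, hBlP, hBμE]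
    -- expand the linear-map applications on the left
    simp only [map_add, map_smul, map_sum, Finset.smul_sum, smul_add, smul_smul]
    simp only [hcomm, smul_smul]
    rw [rearrange4, ← Finset.sum_add_distrib]
    have hsum : ∀ j ∈ (Finset.univ : Finset (Fin M)),
        (F l μ * (τ (lam' j) * G μ (lam' j) * ∏ k ∈ Finset.univ.erase j, F (lam' k) (lam' j))) •
            (B μ) ((B l * (List.map B ((List.ofFn lam').eraseIdx (j : ℕ))).prod) v0)
          + (G μ l * (τ (lam' j) * G l (lam' j) *
                ∏ k ∈ Finset.univ.erase j, F (lam' k) (lam' j))) •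
            (B μ) ((B l * (List.map B ((List.ofFn lam').eraseIdx (j : ℕ))).prod) v0)
          = (τ (lam' j) * G μ (lam' j) *
              (F l (lam' j) * ∏ k ∈ Finset.univ.erase j, F (lam' k) (lam' j))) •
            (B μ) ((B l * (List.map B ((List.ofFn lam').eraseIdx (j : ℕ))).prod) v0) := by
      intro j _
      rw [← add_smul]
      congr 1
      have hid := hFG l μ (lam' j) h1 (Ne.symm (h2 j)) (Ne.symm (h3 j))
      linear_combination (τ (lam' j) * ∏ k ∈ Finset.univ.erase j, F (lam' k) (lam' j)) * hid
    rw [Finset.sum_congr rfl hsum]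
    congr 1
    · congr 1
      ring
    congr 1
    congr 1
    ring

/-- if the Bethe equations hold, the Bethe vector
`B(λ₁)⋯B(λ_M)|0⟩` is an eigenvector of the transfer matrix `A(λ)+D(λ)` with the
stated eigenvalue. -/
theorem bethe_vector_eigen {V : Type*} [AddCommGroup V] [Module ℂ V]
    (A B C D : ℂ → Module.End ℂ V) (α δ : ℂ → ℂ) (v0 : V)
    (hBB : ∀ l m : ℂ, B l * B m = B m * B l)
    (hAB : ∀ l m : ℂ, l ≠ m →
      A m * B l = fXXX l m • (B l * A m) + gXXX m l • (B m * A l))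
    (hDB : ∀ l m : ℂ, l ≠ m →
      D m * B l = fXXX m l • (B l * D m) + gXXX l m • (B m * D l))
    (hA0 : ∀ l : ℂ, A l v0 = α l • v0)
    (hD0 : ∀ l : ℂ, D l v0 = δ l • v0)
    (hC0 : ∀ l : ℂ, C l v0 = 0)
    (M : ℕ) (lam : Fin M → ℂ) (l0 : ℂ)
    (hdist : ∀ i j, i ≠ j → lam i ≠ lam j) (hl0 : ∀ i, lam i ≠ l0)
    (hBethe : ∀ i,
      α (lam i) * gXXX l0 (lam i) * ∏ k ∈ Finset.univ.erase i, fXXX (lam k) (lam i)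
        + δ (lam i) * gXXX (lam i) l0 * ∏ k ∈ Finset.univ.erase i, fXXX (lam i) (lam k)
        = 0) :
    (A l0 + D l0) ((List.ofFn fun i => B (lam i)).prod v0)
      = (α l0 * ∏ i, fXXX (lam i) l0 + δ l0 * ∏ i, fXXX l0 (lam i)) •
          ((List.ofFn fun i => B (lam i)).prod v0) := by
  have hsub : ∀ a b : ℂ, a ≠ b → a - b ≠ 0 := fun a b h => sub_ne_zero.mpr h
  have hFGA : ∀ l m x : ℂ, l ≠ m → m ≠ x → l ≠ x →
      fXXX l m * gXXX m x + gXXX m l * gXXX l x = gXXX m x * fXXX l x := by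
    intro l m x h1 h2 h3
    unfold fXXX gXXX
    have := hsub l m h1; have := hsub m x h2; have := hsub l x h3
    have := hsub m l h1.symm
    field_simp
    ring
  have hFGD : ∀ l m x : ℂ, l ≠ m → m ≠ x → l ≠ x →
      fXXX m l * gXXX x m + gXXX l m * gXXX x l = gXXX x m * fXXX x l := by
    intro l m x h1 h2 h3
    unfold fXXX gXXX
    have := hsub m l h1.symm; have := hsub x m h2.symm; have := hsub x l h3.symm
    have := hsub l m h1
    field_simp
    ring
  have hA := key_lemma B A α fXXX gXXX v0 hBB hAB hA0 hFGA M lam l0 hdist hl0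
  have hD : D l0 ((List.ofFn fun i => B (lam i)).prod v0)
      = (δ l0 * ∏ i, fXXX l0 (lam i)) • (List.ofFn fun i => B (lam i)).prod v0
        + ∑ i, (δ (lam i) * gXXX (lam i) l0 *
              ∏ k ∈ Finset.univ.erase i, fXXX (lam i) (lam k)) •
            (B l0 * (((List.ofFn lam).eraseIdx i.val).map B).prod) v0 :=
    key_lemma B D δ (fun a b => fXXX b a) (fun a b => gXXX b a) v0 hBB
      (fun l m h => hDB l m h) hD0 (fun l m x h1 h2 h3 => hFGD l m x h1 h2 h3)
      M lam l0 hdist hl0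
  rw [LinearMap.add_apply, hA, hD, rearrange4, ← Finset.sum_add_distrib]
  have hzero : ∀ i ∈ Finset.univ, 
      (α (lam i) * gXXX l0 (lam i) * ∏ k ∈ Finset.univ.erase i, fXXX (lam k) (lam i)) •
          (B l0 * (((List.ofFn lam).eraseIdx i.val).map B).prod) v0
        + (δ (lam i) * gXXX (lam i) l0 * ∏ k ∈ Finset.univ.erase i, fXXX (lam i) (lam k)) •
          (B l0 * (((List.ofFn lam).eraseIdx i.val).map B).prod) v0
        = (0 : V) := by
    intro i _
    rw [← add_smul, hBethe i, zero_smul]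
  rw [Finset.sum_congr rfl hzero, Finset.sum_const_zero, add_zero, add_smul]
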